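/- The reduction →_r of the call-by-value resource calculus (comprising the β_r rule, the 0 rule, and the σ₁, σ₃ rules, contextually closed on finite sets of resource terms) is strongly normalizing. -/

import Mathlib

/-- λ-terms possibly containing the constant ⊥ (Λ⊥). Pure λ-terms are those
satisfying `NoBot`. Variables are natural numbers. -/
inductive Tm : Type
  | var : ℕ → Tm
  | lam : ℕ → Tm → Tm
  | app : Tm → Tm → Tm
  | bot : Tm
deriving DecidableEq

namespace Tm

/-- Values of Λ⊥: ⊥, variables and abstractions. -/
def IsVal : Tm → Prop
  | var _ => True
  | lam _ _ => True
  | bot => True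
  | app _ _ => False

/-- A term is a pure λ-term when it contains no occurrence of ⊥. -/
def NoBot : Tm → Prop
  | var _ => True
  | lam _ M => NoBot M
  | app M N => NoBot M ∧ NoBot N
  | bot => False

/-- `FV x M` : the variable `x` occurs free in `M`. -/
inductive FV : ℕ → Tm → Prop
  | var : ∀ x, FV x (var x)
  | lam : ∀ {x y M}, x ≠ y → FV x M → FV x (lam y M)
  | appL : ∀ {x M N}, FV x M → FV x (app M N)
  | appR : ∀ {x M N}, FV x N → FV x (app M N)

/-- Capture-avoiding substitution `M[x := N]` (bound variables are assumed to
be suitably renamed, so we substitute naively under binders `≠ x`). -/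
def subst : Tm → ℕ → Tm → Tm
  | var y, x, N => if y = x then N else var y
  | lam y P, x, N => if y = x then lam y P else lam y (subst P x N)
  | app P Q, x, N => app (subst P x N) (subst Q x N)
  | bot, _, _ => bot

/-- The v-reduction: contextual closure of the rules β_v, σ₁ and σ₃. -/
inductive Step : Tm → Tm → Prop
  | beta : ∀ {x M V}, IsVal V → Step (app (lam x M) V) (subst M x V)
  | sigma1 : ∀ {x M N P}, ¬ FV x P →
      Step (app (app (lam x M) N) P) (app (lam x (app M P)) N)
  | sigma3 : ∀ {x V M N}, IsVal V → ¬ FV x V →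
      Step (app V (app (lam x M) N)) (app (lam x (app V M)) N)
  | appL : ∀ {M M' N}, Step M M' → Step (app M N) (app M' N)
  | appR : ∀ {M N N'}, Step N N' → Step (app M N) (app M N')
  | lam : ∀ {x M M'}, Step M M' → Step (lam x M) (lam x M')

/-- The σ-reduction: contextual closure of the rules σ₁ and σ₃ only. -/
inductive SStep : Tm → Tm → Prop
  | sigma1 : ∀ {x M N P}, ¬ FV x P →
      SStep (app (app (lam x M) N) P) (app (lam x (app M P)) N)
  | sigma3 : ∀ {x V M N}, IsVal V → ¬ FV x V →
      SStep (app V (app (lam x M) N)) (app (lam x (app V M)) N)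
  | appL : ∀ {M M' N}, SStep M M' → SStep (app M N) (app M' N)
  | appR : ∀ {M N N'}, SStep N N' → SStep (app M N) (app M N')
  | lam : ∀ {x M M'}, SStep M M' → SStep (lam x M) (lam x M')

/-- A term is in v-normal form when no v-reduction step applies. -/
def VNormal (M : Tm) : Prop := ∀ N, ¬ Step M N

mutual
  /-- Grammar of v-normal forms: general normal forms `G ::= H | R`. -/
  inductive IsG : Tm → Prop
    | ofH : ∀ {t}, IsH t → IsG t
    | ofR : ∀ {t}, IsR t → IsG t
  /-- head normal forms `H ::= x | λx.G | x H G₁ ⋯ G_k`. -/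
  inductive IsH : Tm → Prop
    | var : ∀ x, IsH (var x)
    | lam : ∀ {x t}, IsG t → IsH (lam x t)
    | spine : ∀ {t}, IsHSpine t → IsH t
  /-- terms of the shape `x H G₁ ⋯ G_k` (k ≥ 0). -/
  inductive IsHSpine : Tm → Prop
    | head : ∀ {x h}, IsH h → IsHSpine (app (var x) h)
    | app : ∀ {t g}, IsHSpine t → IsG g → IsHSpine (app t g)
  /-- redex-like normal forms `R ::= (λx.G)(y H G₁ ⋯ G_k)`. -/
  inductive IsR : Tm → Prop
    | mk : ∀ {x t s}, IsG t → IsHSpine s → IsR (app (lam x t) s)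
end

mutual
  /-- The set 𝒜 of approximants: `A ::= B | C`. -/
  inductive IsA : Tm → Prop
    | ofB : ∀ {t}, IsB t → IsA t
    | ofC : ∀ {t}, IsC t → IsA t
  /-- `B ::= x | λx.A | ⊥ | x B A₁ ⋯ A_k`. -/
  inductive IsB : Tm → Prop
    | var : ∀ x, IsB (var x)
    | lam : ∀ {x t}, IsA t → IsB (lam x t)
    | bot : IsB bot
    | spine : ∀ {t}, IsBSpine t → IsB t
  /-- terms of the shape `x B A₁ ⋯ A_k` (k ≥ 0). -/
  inductive IsBSpine : Tm → Prop
    | head : ∀ {x b}, IsB b → IsBSpine (app (var x) b)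
    | app : ∀ {t a}, IsBSpine t → IsA a → IsBSpine (app t a)
  /-- `C ::= (λx.A)(y B A₁ ⋯ A_k)`. -/
  inductive IsC : Tm → Prop
    | mk : ∀ {x t s}, IsA t → IsBSpine s → IsC (app (lam x t) s)
end

/-- The order ⊑ on Λ⊥: context-closed preorder generated by ⊥ ⊑ x, ⊥ ⊑ λx.M. -/
inductive LE : Tm → Tm → Prop
  | refl : ∀ t, LE t t
  | botVar : ∀ x, LE bot (var x)
  | botLam : ∀ x t, LE bot (lam x t)
  | lam : ∀ {x s t}, LE s t → LE (lam x s) (lam x t)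
  | app : ∀ {s₁ s₂ t₁ t₂}, LE s₁ t₁ → LE s₂ t₂ → LE (app s₁ s₂) (app t₁ t₂)

/-- The set of approximants of a term:
`𝒜(M) = { A ∈ 𝒜 | ∃ N, M →*_v N and A ⊑ N }`. -/
def ApproxOf (M : Tm) : Set Tm :=
  {A | IsA A ∧ ∃ N, Relation.ReflTransGen Step M N ∧ LE A N}

end Tm

/-- Single-hole (⊥-)contexts. -/
inductive Ctx : Type
  | hole : Ctx
  | appL : Ctx → Tm → Ctx
  | appR : Tm → Ctx → Ctx
  | lam : ℕ → Ctx → Ctx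

/-- Filling the hole of a context with a term (possibly capturing variables). -/
def Ctx.fill : Ctx → Tm → Tm
  | .hole, M => M
  | .appL C N, M => .app (C.fill M) N
  | .appR N C, M => .app N (C.fill M)
  | .lam x C, M => .lam x (C.fill M)

/-- Resource terms of the CbV resource calculus: resource values are
variables `var x` and abstractions `lam x t`; simple terms are applications
`app s t` and bags `bag [v₁,…,v_k]` (finite multisets of values, represented
as lists considered up to permutation by the rules below). -/
inductive RTm : Type
  | var : ℕ → RTm
  | lam : ℕ → RTm → RTm
  | app : RTm → RTm → RTm
  | bag : List RTm → RTm

namespace RTm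

/-- Resource values. -/
def IsRVal : RTm → Prop
  | var _ => True
  | lam _ _ => True
  | _ => False

/-- Simple terms (applications and bags). -/
def IsSimple : RTm → Prop
  | app _ _ => True
  | bag _ => True
  | _ => False

/-- Free-variable occurrence predicate for resource terms. -/
inductive RFV : ℕ → RTm → Prop
  | var : ∀ x, RFV x (var x)
  | lam : ∀ {x y t}, x ≠ y → RFV x t → RFV x (lam y t)
  | appL : ∀ {x s t}, RFV x s → RFV x (app s t)
  | appR : ∀ {x s t}, RFV x t → RFV x (app s t)
  | bag : ∀ {x t ts}, t ∈ ts → RFV x t → RFV x (bag ts)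

/-- Linear substitution: `LSubst e x vs e'` holds iff `e'` is one of the terms
obtained from `e` by substituting the values `vs` bijectively for the free
occurrences of `x` in `e` (no such `e'` exists if the count mismatches). -/
inductive LSubst : RTm → ℕ → List RTm → RTm → Prop
  | varEq : ∀ x v, LSubst (var x) x [v] v
  | varNe : ∀ {x y}, y ≠ x → LSubst (var y) x [] (var y)
  | lamEq : ∀ x t, LSubst (lam x t) x [] (lam x t)
  | lamNe : ∀ {x y t vs t'}, y ≠ x → LSubst t x vs t' →
      LSubst (lam y t) x vs (lam y t')
  | app : ∀ {s t x us ws vs s' t'}, LSubst s x us s' → LSubst t x ws t' →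
      vs.Perm (us ++ ws) → LSubst (app s t) x vs (app s' t')
  | bagNil : ∀ x, LSubst (bag []) x [] (bag [])
  | bagCons : ∀ {v ts x us ws vs v' ts'}, LSubst v x us v' →
      LSubst (bag ts) x ws (bag ts') → vs.Perm (us ++ ws) →
      LSubst (bag (v :: ts)) x vs (bag (v' :: ts'))

/-- One step of resource reduction at the level of terms, producing a
(finite) set of resource terms: rules β_r, 0, σ₁, σ₃, contextually closed. -/
inductive RStep : RTm → Set RTm → Prop
  | beta : ∀ {x t vs}, (∀ v ∈ vs, IsRVal v) →
      RStep (app (bag [lam x t]) (bag vs)) {t' | LSubst t x vs t'}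
  | zero : ∀ {vs t}, (∀ v ∈ vs, IsRVal v) → vs.length ≠ 1 →
      RStep (app (bag vs) t) ∅
  | sigma1 : ∀ {x t s₁ s₂}, ¬ RFV x s₁ →
      RStep (app (app (bag [lam x t]) s₁) s₂) {app (bag [lam x (app t s₂)]) s₁}
  | sigma3 : ∀ {v x t s}, IsRVal v → ¬ RFV x v →
      RStep (app (bag [v]) (app (bag [lam x t]) s))
        {app (bag [lam x (app (bag [v]) t)]) s}
  | appL : ∀ {s S t}, RStep s S → RStep (app s t) {u | ∃ s' ∈ S, u = app s' t}
  | appR : ∀ {s t T}, RStep t T → RStep (app s t) {u | ∃ t' ∈ T, u = app s t'}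
  | lam : ∀ {x t T}, RStep t T → RStep (lam x t) {u | ∃ t' ∈ T, u = lam x t'}
  | bagHead : ∀ {v V ts}, RStep v V →
      RStep (bag (v :: ts)) {u | ∃ v' ∈ V, u = bag (v' :: ts)}
  | bagTail : ∀ {v ts T}, RStep (bag ts) T →
      RStep (bag (v :: ts)) {u | ∃ ts', bag ts' ∈ T ∧ u = bag (v :: ts')}

/-- The resource reduction →_r lifted to sets of resource terms:
`{e} ∪ E₂ →_r E₁ ∪ E₂` whenever `e →_r E₁` and `e ∉ E₂`. -/
inductive RSetStep : Set RTm → Set RTm → Prop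
  | mk : ∀ {e E₁ E₂}, RStep e E₁ → e ∉ E₂ → RSetStep (insert e E₂) (E₁ ∪ E₂)

/-- A set of resource terms is →_r-normal when no set-level step applies. -/
def RSetNormal (S : Set RTm) : Prop := ∀ S', ¬ RSetStep S S'

/-- `NF(E) = ⋃_{e ∈ E} nf_r(e)` : the set of resource terms occurring in the
(unique, by confluence and strong normalization) →_r-normal form of some
element of `E`. -/
def NF (E : Set RTm) : Set RTm :=
  {t | ∃ e ∈ E, ∃ S, Relation.ReflTransGen RSetStep {e} S ∧ RSetNormal S ∧ t ∈ S}

/-- `HasBRS t` : `t` contains a β_r-, σ₁- or σ₃-redex (0-redexes not counted). -/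
inductive HasBRS : RTm → Prop
  | beta : ∀ {x t vs}, (∀ v ∈ vs, IsRVal v) →
      HasBRS (app (bag [lam x t]) (bag vs))
  | sigma1 : ∀ {x t s₁ s₂}, ¬ RFV x s₁ → HasBRS (app (app (bag [lam x t]) s₁) s₂)
  | sigma3 : ∀ {v x t s}, IsRVal v → ¬ RFV x v →
      HasBRS (app (bag [v]) (app (bag [lam x t]) s))
  | appL : ∀ {s t}, HasBRS s → HasBRS (app s t)
  | appR : ∀ {s t}, HasBRS t → HasBRS (app s t)
  | lam : ∀ {x t}, HasBRS t → HasBRS (lam x t)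
  | bag : ∀ {t ts}, t ∈ ts → HasBRS t → HasBRS (bag ts)

mutual
  /-- The height of a resource term. -/
  def height : RTm → ℕ
    | var _ => 0
    | lam _ t => height t + 1
    | app s t => max (height s) (height t) + 1
    | bag ts => heightList ts + 1
  def heightList : List RTm → ℕ
    | [] => 0
    | t :: ts => max (height t) (heightList ts)
end

/-- The height of a set of resource terms (possibly infinite). -/
noncomputable def hSet (E : Set RTm) : ℕ∞ := ⨆ t ∈ E, (height t : ℕ∞)

/-- The coherence relation ¨ on resource terms. -/
inductive Coh : RTm → RTm → Prop
  | var : ∀ x, Coh (var x) (var x)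
  | lam : ∀ {x s t}, Coh s t → Coh (lam x s) (lam x t)
  | bag : ∀ {us vs}, (∀ a ∈ us ++ vs, ∀ b ∈ us ++ vs, Coh a b) →
      Coh (bag us) (bag vs)
  | app : ∀ {s₁ s₂ t₁ t₂}, Coh s₁ s₂ → Coh t₁ t₂ → Coh (app s₁ t₁) (app s₂ t₂)

/-- A clique: a set of pairwise coherent resource terms. -/
def Clique (E : Set RTm) : Prop := ∀ s ∈ E, ∀ t ∈ E, Coh s t

/-- A maximal clique: no resource term can be added keeping it a clique. -/
def MaxClique (E : Set RTm) : Prop :=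
  Clique E ∧ ∀ e : RTm, Clique (insert e E) → e ∈ E

end RTm
/-- The Taylor expansion: `InT M t` iff the simple term `t` belongs to 𝒯(M). -/
inductive InT : Tm → RTm → Prop
  | var : ∀ x n, InT (.var x) (.bag (List.replicate n (.var x)))
  | lam : ∀ {x N} (ts : List RTm), (∀ t ∈ ts, InT N t) →
      InT (.lam x N) (.bag (ts.map (RTm.lam x)))
  | app : ∀ {P Q s t}, InT P s → InT Q t → InT (.app P Q) (.app s t)

/-- The Taylor expansion 𝒯(M) of a λ-term, as a set of resource terms. -/
def Taylor (M : Tm) : Set RTm := {t | InT M t}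

/-- The normalized Taylor expansion of an approximant: `InTn A t` iff
`t ∈ 𝒯ⁿᶠ(A)`, following the grammar of approximants. -/
inductive InTn : Tm → RTm → Prop
  | var : ∀ x n, InTn (.var x) (.bag (List.replicate n (.var x)))
  | bot : InTn .bot (.bag [])
  | lam : ∀ {x A} (ts : List RTm), (∀ t ∈ ts, InTn A t) →
      InTn (.lam x A) (.bag (ts.map (RTm.lam x)))
  | spineHead : ∀ {x B t}, InTn B t →
      InTn (.app (.var x) B) (.app (.bag [.var x]) t)
  | spineApp : ∀ {S A s t}, Tm.IsBSpine S → InTn S s → InTn A t →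
      InTn (.app S A) (.app s t)
  | redex : ∀ {x A Q s t}, InTn A s → Tm.IsBSpine Q → InTn Q t →
      InTn (.app (.lam x A) Q) (.app (.bag [.lam x s]) t)

/-- The normalized Taylor expansion 𝒯ⁿᶠ(A) of an approximant. -/
def TaylorN (A : Tm) : Set RTm := {t | InTn A t}

namespace RTm

mutual
  /-- Size of a resource term. -/
  def rsize : RTm → ℕ
    | var _ => 1
    | lam _ t => rsize t + 1
    | app s t => rsize s + rsize t + 1
    | bag ts => rsizeL ts + 1
  def rsizeL : List RTm → ℕ
    | [] => 0
    | t :: ts => rsize t + rsizeL ts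
end

mutual
  /-- Multiplicative weight, strictly decreasing along σ-steps. -/
  def wgt : RTm → ℕ
    | var _ => 2
    | lam _ t => wgt t + 1
    | app s t => wgt s * wgt t
    | bag ts => wgtL ts + 2
  def wgtL : List RTm → ℕ
    | [] => 0
    | t :: ts => wgt t + wgtL ts
end

lemma two_le_wgt : ∀ t, 2 ≤ wgt t
  | var _ => le_refl _
  | lam _ t => by have := two_le_wgt t; simp only [wgt]; omega
  | app s t => by
      have hs := two_le_wgt s; have ht := two_le_wgt t
      simp only [wgt]; nlinarith
  | bag _ => by simp only [wgt]; omega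

lemma one_le_rsize : ∀ t, 1 ≤ rsize t := by
  intro t; cases t <;> simp only [rsize] <;> omega

lemma rsizeL_eq_sum (l : List RTm) : rsizeL l = (l.map rsize).sum := by
  induction l with
  | nil => rfl
  | cons a l ih => simp [rsizeL, ih]

lemma rsizeL_perm {l₁ l₂ : List RTm} (h : l₁.Perm l₂) : rsizeL l₁ = rsizeL l₂ := by
  rw [rsizeL_eq_sum, rsizeL_eq_sum]
  exact (h.map rsize).sum_eq

lemma rsizeL_append (l₁ l₂ : List RTm) : rsizeL (l₁ ++ l₂) = rsizeL l₁ + rsizeL l₂ := by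
  induction l₁ with
  | nil => simp [rsizeL]
  | cons a l ih =>
      simp only [List.cons_append, rsizeL, List.append_eq] at *
      omega

lemma lsubst_rsize {t : RTm} {x : ℕ} {vs : List RTm} {t' : RTm}
    (h : LSubst t x vs t') : rsize t' ≤ rsize t + rsizeL vs := by
  induction h with
  | varEq x v => simp [rsize, rsizeL]
  | varNe h => simp [rsizeL]
  | lamEq x t => simp [rsizeL]
  | lamNe h hs ih => simp only [rsize, rsizeL] at *; omega
  | app hs ht hperm ihs iht =>
      have hp := rsizeL_perm hperm
      rw [rsizeL_append] at hp
      simp only [rsize] at *; omega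
  | bagNil x => simp [rsizeL]
  | bagCons hv hts hperm ihv ihts =>
      have hp := rsizeL_perm hperm
      rw [rsizeL_append] at hp
      simp only [rsize, rsizeL] at *; omega

/-- Lexicographic measure comparison. -/
def MLt (e e' : RTm) : Prop :=
  rsize e < rsize e' ∨ (rsize e = rsize e' ∧ wgt e < wgt e')

lemma mlt_wf : WellFounded MLt := by
  have h : WellFounded (Prod.Lex ((· < ·) : ℕ → ℕ → Prop) ((· < ·) : ℕ → ℕ → Prop)) :=
    WellFounded.prod_lex Nat.lt_wfRel.wf Nat.lt_wfRel.wf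
  have h2 := InvImage.wf (fun e : RTm => ((rsize e, wgt e) : ℕ × ℕ)) h
  refine Subrelation.wf (fun {a b} hab => ?_) h2
  rcases hab with h1 | ⟨h1, h2⟩
  · exact Prod.lex_def.2 (Or.inl h1)
  · exact Prod.lex_def.2 (Or.inr ⟨h1, h2⟩)

lemma rstep_mlt {e : RTm} {E : Set RTm} (h : RStep e E) : ∀ e' ∈ E, MLt e' e := by
  induction h with
  | @beta x t vs hv =>
      intro e' he'
      left
      have hle := lsubst_rsize (he' : LSubst t x vs e')
      simp only [rsize, rsizeL]
      omega
  | zero hv hl => intro e' he'; exact absurd he' (Set.notMem_empty _)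
  | @sigma1 x t s₁ s₂ hfv =>
      intro e' he'
      simp only [Set.mem_singleton_iff] at he'; subst he'
      right
      constructor
      · simp only [rsize, rsizeL]; omega
      · simp only [wgt, wgtL]
        have h1 := two_le_wgt s₁; have h2 := two_le_wgt s₂; have h3 := two_le_wgt t
        nlinarith
  | @sigma3 v x t s hv hfv =>
      intro e' he'
      simp only [Set.mem_singleton_iff] at he'; subst he'
      right
      constructor
      · simp only [rsize, rsizeL]; omega
      · simp only [wgt, wgtL]
        have h1 := two_le_wgt v; have h2 := two_le_wgt s; have h3 := two_le_wgt t
        nlinarith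
  | @appL s S t hs ih =>
      rintro e' ⟨s', hs', rfl⟩
      rcases ih s' hs' with h1 | ⟨h1, h2⟩
      · left; simp only [rsize]; omega
      · right
        refine ⟨by simp only [rsize]; omega, ?_⟩
        simp only [wgt]
        have h3 := two_le_wgt t
        nlinarith
  | @appR s t T ht ih =>
      rintro e' ⟨t', ht', rfl⟩
      rcases ih t' ht' with h1 | ⟨h1, h2⟩
      · left; simp only [rsize]; omega
      · right
        refine ⟨by simp only [rsize]; omega, ?_⟩
        simp only [wgt]
        have h3 := two_le_wgt s
        nlinarith
  | @lam x t T ht ih =>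
      rintro e' ⟨t', ht', rfl⟩
      rcases ih t' ht' with h1 | ⟨h1, h2⟩
      · left; simp only [rsize]; omega
      · right; exact ⟨by simp only [rsize]; omega, by simp only [wgt]; omega⟩
  | @bagHead v V ts hv ih =>
      rintro e' ⟨v', hv', rfl⟩
      rcases ih v' hv' with h1 | ⟨h1, h2⟩
      · left; simp only [rsize, rsizeL]; omega
      · right
        exact ⟨by simp only [rsize, rsizeL]; omega,
          by simp only [wgt, wgtL]; omega⟩
  | @bagTail v ts T hts ih =>
      rintro e' ⟨ts', hts', rfl⟩
      rcases ih _ hts' with h1 | ⟨h1, h2⟩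
      · left; simp only [rsize, rsizeL] at *; omega
      · right
        constructor
        · simp only [rsize, rsizeL] at *; omega
        · simp only [wgt, wgtL] at *; omega

/-- The element-level descendant relation: `e'` is a one-step reduct of `e`. -/
def RDesc (e' e : RTm) : Prop := ∃ E, RStep e E ∧ e' ∈ E

lemma rdesc_wf : WellFounded RDesc :=
  Subrelation.wf
    (fun {e' e} h => by obtain ⟨E, hE, he'⟩ := h; exact rstep_mlt hE e' he') mlt_wf

/-- helper to reconstruct bags -/
def consBag (v : RTm) : RTm → RTm
  | bag ts => bag (v :: ts)
  | u => u

lemma lsubst_finite : ∀ (t : RTm) (x : ℕ) (vs : List RTm),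
    {t' | LSubst t x vs t'}.Finite := by
  have main : ∀ (N : ℕ) (t : RTm), rsize t ≤ N → ∀ (x : ℕ) (vs : List RTm),
      {t' | LSubst t x vs t'}.Finite := by
    intro N
    induction N with
    | zero =>
        intro t h
        exfalso
        have := one_le_rsize t
        omega
    | succ N ih =>
        intro t ht x vs
        have hSP : ∀ us ws : List RTm, vs.Perm (us ++ ws) →
            us ∈ vs.sublists.flatMap List.permutations ∧
            ws ∈ vs.sublists.flatMap List.permutations := by
          intro us ws hperm
          constructor
          · have h1 : us.Subperm vs :=
              ((List.sublist_append_left us ws).subperm).trans hperm.symm.subperm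
            obtain ⟨l, hl1, hl2⟩ := h1
            exact List.mem_flatMap.2 ⟨l, List.mem_sublists.2 hl2,
              List.mem_permutations.2 hl1.symm⟩
          · have h1 : ws.Subperm vs :=
              ((List.sublist_append_right us ws).subperm).trans hperm.symm.subperm
            obtain ⟨l, hl1, hl2⟩ := h1
            exact List.mem_flatMap.2 ⟨l, List.mem_sublists.2 hl2,
              List.mem_permutations.2 hl1.symm⟩
        match t with
        | var y =>
            apply Set.Finite.subset ((vs.finite_toSet).union (Set.finite_singleton (var y)))
            rintro t' ht'
            cases ht' with
            | varEq => exact Set.mem_union_left _ (by simp)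
            | varNe h => exact Set.mem_union_right _ rfl
        | lam y s =>
            apply Set.Finite.subset
              (Set.Finite.union (Set.finite_singleton (lam y s))
                ((ih s (by simp only [rsize] at ht; omega) x vs).image (RTm.lam y)))
            rintro t' ht'
            cases ht' with
            | lamEq => exact Set.mem_union_left _ rfl
            | lamNe h hs => exact Set.mem_union_right _ ⟨_, hs, rfl⟩
        | app s u =>
            have hA : (⋃ us ∈ {l | l ∈ vs.sublists.flatMap List.permutations},
                {s' | LSubst s x us s'}).Finite :=
              Set.Finite.biUnion (List.finite_toSet _)
                (fun us _ => ih s (by simp only [rsize] at ht; omega) x us)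
            have hB : (⋃ ws ∈ {l | l ∈ vs.sublists.flatMap List.permutations},
                {u' | LSubst u x ws u'}).Finite :=
              Set.Finite.biUnion (List.finite_toSet _)
                (fun ws _ => ih u (by simp only [rsize] at ht; omega) x ws)
            apply Set.Finite.subset (Set.Finite.image2 RTm.app hA hB)
            rintro t' ht'
            cases ht' with
            | app hs hu hperm =>
                obtain ⟨h1, h2⟩ := hSP _ _ hperm
                exact Set.mem_image2_of_mem
                  (Set.mem_biUnion h1 hs) (Set.mem_biUnion h2 hu)
        | bag [] =>
            apply Set.Finite.subset (Set.finite_singleton (bag []))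
            rintro t' ht'
            cases ht'
            rfl
        | bag (v :: ts) =>
            have hA : (⋃ us ∈ {l | l ∈ vs.sublists.flatMap List.permutations},
                {v' | LSubst v x us v'}).Finite :=
              Set.Finite.biUnion (List.finite_toSet _)
                (fun us _ => ih v (by
                  simp only [rsize, rsizeL] at ht; omega) x us)
            have hB : (⋃ ws ∈ {l | l ∈ vs.sublists.flatMap List.permutations},
                {u' | LSubst (bag ts) x ws u'}).Finite :=
              Set.Finite.biUnion (List.finite_toSet _)
                (fun ws _ => ih (bag ts) (by
                  have hv1 := one_le_rsize v
                  simp only [rsize, rsizeL] at ht ⊢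
                  omega) x ws)
            apply Set.Finite.subset (Set.Finite.image2 consBag hA hB)
            rintro t' ht'
            cases ht' with
            | bagCons hv hts hperm =>
                obtain ⟨h1, h2⟩ := hSP _ _ hperm
                exact Set.mem_image2.2
                  ⟨_, Set.mem_biUnion h1 hv, _, Set.mem_biUnion h2 hts, rfl⟩
  intro t x vs
  exact main (rsize t) t le_rfl x vs

lemma rstep_finite {e : RTm} {E : Set RTm} (h : RStep e E) : E.Finite := by
  induction h with
  | @beta x t vs hv => exact lsubst_finite t x vs
  | zero hv hl => exact Set.finite_empty
  | sigma1 hfv => exact Set.finite_singleton _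
  | sigma3 hv hfv => exact Set.finite_singleton _
  | @appL s S t hs ih =>
      apply Set.Finite.subset (ih.image (fun s' => app s' t))
      rintro u ⟨s', hs', rfl⟩; exact ⟨s', hs', rfl⟩
  | @appR s t T ht ih =>
      apply Set.Finite.subset (ih.image (fun t' => app s t'))
      rintro u ⟨t', ht', rfl⟩; exact ⟨t', ht', rfl⟩
  | @lam x t T ht ih =>
      apply Set.Finite.subset (ih.image (fun t' => lam x t'))
      rintro u ⟨t', ht', rfl⟩; exact ⟨t', ht', rfl⟩
  | @bagHead v V ts hv ih =>
      apply Set.Finite.subset (ih.image (fun v' => bag (v' :: ts)))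
      rintro u ⟨v', hv', rfl⟩; exact ⟨v', hv', rfl⟩
  | @bagTail v ts T hts ih =>
      apply Set.Finite.subset (ih.image (consBag v))
      rintro u ⟨ts', hts', rfl⟩; exact ⟨bag ts', hts', rfl⟩

lemma rsetStep_inv {S F : Set RTm} (h : RSetStep S F) :
    ∃ a E₁ E₂, RStep a E₁ ∧ a ∉ E₂ ∧ S = insert a E₂ ∧ F = E₁ ∪ E₂ := by
  cases h with
  | mk h1 h2 => exact ⟨_, _, _, h1, h2, rfl, rfl⟩

/-- Accessibility for the reversed set-level reduction. -/
abbrev AccS (E : Set RTm) : Prop := Acc (fun S S' => RSetStep S' S) E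

lemma accS_union (S : Set RTm) (hS : S.Finite)
    (hins : ∀ x ∈ S, ∀ E : Set RTm, E.Finite → AccS E → AccS (insert x E)) :
    ∀ E : Set RTm, E.Finite → AccS E → AccS (S ∪ E) := by
  revert hins
  refine Set.Finite.induction_on
    (motive := fun S _ => (∀ x ∈ S, ∀ E : Set RTm, E.Finite → AccS E → AccS (insert x E)) →
      ∀ E : Set RTm, E.Finite → AccS E → AccS (S ∪ E)) S hS ?_ ?_
  · intro _ E hE hacc; simpa using hacc
  · intro x S' hx hS' ihS hins E hE hacc
    rw [Set.insert_union]
    exact hins x (Set.mem_insert _ _) (S' ∪ E) (hS'.union hE)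
      (ihS (fun y hy => hins y (Set.mem_insert_of_mem _ hy)) E hE hacc)

lemma accS_insert : ∀ e : RTm, Acc RDesc e →
    ∀ E : Set RTm, E.Finite → AccS E → AccS (insert e E) := by
  intro e he
  induction he with
  | intro e _ IH1 =>
    intro E hEfin hE
    revert hEfin
    induction hE with
    | intro E h IH2 =>
      intro hEfin
      by_cases hmem : e ∈ E
      · rw [Set.insert_eq_self.2 hmem]
        exact Acc.intro E h
      · constructor
        intro F hF
        obtain ⟨a, E₁, E₂, ha, haE₂, hSeq, hFeq⟩ := rsetStep_inv hF
        by_cases hae : a = e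
        · subst hae
          have hE₂ : E₂ = E := by
            apply Set.eq_of_subset_of_subset
            · intro z hz
              have hz' : z ∈ insert a E := by
                rw [hSeq]; exact Set.mem_insert_of_mem _ hz
              rcases hz' with rfl | hz'
              · exact absurd hz haE₂
              · exact hz'
            · intro z hz
              have hz' : z ∈ insert a E₂ := by
                rw [← hSeq]; exact Set.mem_insert_of_mem _ hz
              rcases hz' with rfl | hz'
              · exact absurd hz hmem
              · exact hz'
          rw [hFeq, hE₂]
          exact accS_union E₁ (rstep_finite ha)
            (fun z hz => IH1 z ⟨E₁, ha, hz⟩) E hEfin (Acc.intro E h)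
        · have haE : a ∈ E := by
            have hz : a ∈ insert e E := by
              rw [hSeq]; exact Set.mem_insert _ _
            rcases hz with heq | hz
            · exact absurd heq hae
            · exact hz
          have heE₂ : e ∈ E₂ := by
            have hz : e ∈ insert a E₂ := by
              rw [← hSeq]; exact Set.mem_insert _ _
            rcases hz with heq | hz
            · exact absurd heq.symm hae
            · exact hz
          have hE₂eq : E₂ = insert e (E \ {a}) := by
            apply Set.eq_of_subset_of_subset
            · intro z hz
              have hz' : z ∈ insert e E := by
                rw [hSeq]; exact Set.mem_insert_of_mem _ hz
              rcases hz' with rfl | hz'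
              · exact Set.mem_insert _ _
              · refine Set.mem_insert_of_mem _ ⟨hz', ?_⟩
                intro hza
                rw [Set.mem_singleton_iff] at hza
                subst hza
                exact haE₂ hz
            · intro z hz
              rcases hz with rfl | ⟨hz1, hz2⟩
              · exact heE₂
              · have hz' : z ∈ insert a E₂ := by
                  rw [← hSeq]; exact Set.mem_insert_of_mem _ hz1
                rcases hz' with rfl | hz'
                · exact absurd rfl hz2
                · exact hz'
          have hstep' : RSetStep E (E₁ ∪ (E \ {a})) := by
            have hEeq : E = insert a (E \ {a}) := by
              rw [Set.insert_diff_singleton, Set.insert_eq_self.2 haE]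
            have hmk := RSetStep.mk (E₂ := E \ {a}) ha
              (by intro hcon; exact hcon.2 rfl)
            rw [← hEeq] at hmk
            exact hmk
          have hfin' : (E₁ ∪ (E \ {a})).Finite :=
            (rstep_finite ha).union (hEfin.diff)
          have hF' : F = insert e (E₁ ∪ (E \ {a})) := by
            rw [hFeq, hE₂eq, Set.union_insert]
          rw [hF']
          exact IH2 _ hstep' hfin'

lemma accS_empty : AccS (∅ : Set RTm) := by
  constructor
  intro F hF
  obtain ⟨a, E₁, E₂, _, _, hSeq, _⟩ := rsetStep_inv hF
  have : a ∈ (∅ : Set RTm) := by rw [hSeq]; exact Set.mem_insert _ _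
  exact absurd this (Set.notMem_empty a)

end RTm

/-- the resource reduction →_r (β_r, 0, σ₁, σ₃, contextually
closed and lifted to finite sets of resource terms) is strongly normalizing:
every finite set of resource terms is accessible for the reversed reduction. -/
theorem resource_reduction_sn :
    ∀ E : Set RTm, E.Finite → Acc (fun S S' => RTm.RSetStep S' S) E := by
  intro E hE
  have h := RTm.accS_union E hE
    (fun x _ => RTm.accS_insert x (RTm.rdesc_wf.apply x)) ∅ Set.finite_empty RTm.accS_empty
  simpa using h
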